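/- Let L be a first-order language and M an L-structure. For any sets A, B ⊆ M there is a subset C ⊆ A of cardinality at most max(|L|, ℵ₀, |B|) such that for every L-formula φ(x̄; ȳ) (with free variables split into two finite blocks), every tuple b̄ of elements of B∪C and every tuple ā of elements of A with M ⊨ φ(ā; b̄), there is a tuple c̄ of elements of C with M ⊨ φ(c̄; b̄) (i.e., the type over B∪C of an enumeration of A is finitely satisfied in C). -/
import Mathlib


universe u

open Cardinal FirstOrder Set

namespace Stmt8Aux

variable {L : FirstOrder.Language.{u, u}} {M : Type u} [L.Structure M]

/-- existence of a witness tuple in `A`. -/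
def Hex (A : Set M) {n m : ℕ} (φ : L.Formula (Fin n ⊕ Fin m)) (b : Fin m → M) : Prop :=
  ∃ a : Fin n → M, (∀ i, a i ∈ A) ∧ φ.Realize (Sum.elim a b)

/-- Index type for the witness sets. -/
def Idx (L : FirstOrder.Language.{u, u}) (M : Type u) (S : Set M) : Type u :=
  Σ n : ULift.{u} ℕ, Σ m : ULift.{u} ℕ,
    L.Formula (Fin n.down ⊕ Fin m.down) × (Fin m.down → ↥S)

/-- The set of coordinates of the chosen witness for an index. -/
noncomputable def wset (A : Set M) {S : Set M} (p : Idx L M S) : Set M :=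
  {x | ∃ h : Hex A p.2.2.1 (fun i => ((p.2.2.2 i : M))), ∃ i, x = h.choose i}

lemma wset_subset (A : Set M) {S : Set M} (p : Idx L M S) : wset A p ⊆ A := by
  rintro x ⟨h, i, rfl⟩
  exact h.choose_spec.1 i

lemma mk_wset_le (A : Set M) {S : Set M} (p : Idx L M S) : #(wset A p) ≤ ℵ₀ := by
  by_cases h : Hex A p.2.2.1 (fun i => ((p.2.2.2 i : M)))
  · have hsub : wset A p ⊆ Set.range h.choose := by
      rintro x ⟨h', i, rfl⟩
      exact ⟨i, rfl⟩
    exact le_of_lt (((Set.finite_range _).subset hsub).lt_aleph0)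
  · have : wset A p = ∅ := by
      ext x
      simp only [wset, Set.mem_setOf_eq, Set.mem_empty_iff_false, iff_false]
      rintro ⟨h', -⟩
      exact h h'
    simp [this]

/-- one step of the closure construction -/
noncomputable def step (L : FirstOrder.Language.{u, u}) {M : Type u} [L.Structure M]
    (A B S : Set M) : Set M :=
  ⋃ p : Idx L M (B ∪ S), wset A p

lemma step_subset (A B S : Set M) : step L A B S ⊆ A :=
  Set.iUnion_subset fun p => wset_subset A p

noncomputable def Cseq (L : FirstOrder.Language.{u, u}) {M : Type u} [L.Structure M]
    (A B : Set M) : ℕ → Set M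
  | 0 => ∅
  | k + 1 => Cseq L A B k ∪ step L A B (Cseq L A B k)

lemma Cseq_zero (A B : Set M) : Cseq L A B 0 = ∅ := rfl

lemma Cseq_succ (A B : Set M) (k : ℕ) :
    Cseq L A B (k + 1) = Cseq L A B k ∪ step L A B (Cseq L A B k) := rfl

lemma Cseq_subset (A B : Set M) : ∀ k, Cseq L A B k ⊆ A
  | 0 => by rw [Cseq_zero]; exact Set.empty_subset A
  | k + 1 => by
      rw [Cseq_succ]
      exact Set.union_subset (Cseq_subset A B k) (step_subset A B _)

lemma Cseq_mono (A B : Set M) : Monotone (Cseq L A B) := by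
  apply monotone_nat_of_le_succ
  intro k
  rw [Cseq_succ]
  exact Set.subset_union_left

section Card

variable (κ : Cardinal.{u}) (hκ : ℵ₀ ≤ κ) (hL : L.card ≤ κ)

include hκ hL

lemma mk_formula_le (n m : ℕ) : #(L.Formula (Fin n ⊕ Fin m)) ≤ κ := by
  have h1 : #(L.Formula (Fin n ⊕ Fin m)) ≤ #(Σ k, L.BoundedFormula (Fin n ⊕ Fin m) k) :=
    mk_le_of_injective (f := fun φ => ⟨0, φ⟩) (fun a b hab => by
      simpa using hab)
  refine h1.trans (FirstOrder.Language.BoundedFormula.card_le.trans ?_)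
  apply max_le hκ
  apply Cardinal.add_le_of_le hκ
  · refine le_trans ?_ hκ
    simp only [Cardinal.mk_sum, Cardinal.mk_fintype, Fintype.card_fin, Cardinal.lift_natCast,
      Cardinal.lift_add]
    exact (Cardinal.nat_lt_aleph0 _).le
  · simpa using hL
  
lemma mk_idx_le (S : Set M) (hS : #S ≤ κ) : #(Idx L M S) ≤ κ := by
  have hfib : ∀ (n m : ULift.{u} ℕ),
      #(L.Formula (Fin n.down ⊕ Fin m.down) × (Fin m.down → ↥S)) ≤ κ := by
    intro n m
    rw [Cardinal.mk_prod]
    have h1 : #(Fin m.down → ↥S) ≤ κ := by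
      rw [Cardinal.mk_arrow]
      have : Cardinal.lift.{u} #(Fin m.down) = (m.down : Cardinal.{u}) := by
        simp
      rw [this, Cardinal.lift_id']
      calc #↥S ^ (m.down : Cardinal.{u}) ≤ κ ^ (m.down : Cardinal.{u}) :=
            Cardinal.power_le_power_right hS
        _ ≤ κ := Cardinal.power_nat_le hκ
    calc Cardinal.lift.{u} #(L.Formula (Fin n.down ⊕ Fin m.down)) *
          Cardinal.lift.{u} #(Fin m.down → ↥S)
        ≤ κ * κ := by
          apply mul_le_mul'
          · simpa using mk_formula_le κ hκ hL n.down m.down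
          · simpa using h1
      _ = κ := Cardinal.mul_eq_self hκ
  have : #(Idx L M S) ≤ Cardinal.sum (fun _ : ULift.{u} ℕ => κ) := by
    rw [Idx, Cardinal.mk_sigma]
    refine Cardinal.sum_le_sum _ _ (fun n => ?_)
    rw [Cardinal.mk_sigma]
    refine le_trans (Cardinal.sum_le_sum _ (fun _ => κ) (fun m => hfib n m)) ?_
    rw [Cardinal.sum_const']
    calc #(ULift.{u} ℕ) * κ = ℵ₀ * κ := by simp
      _ ≤ κ * κ := mul_le_mul' hκ le_rfl
      _ = κ := Cardinal.mul_eq_self hκ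
  refine this.trans ?_
  rw [Cardinal.sum_const']
  calc #(ULift.{u} ℕ) * κ = ℵ₀ * κ := by simp
    _ ≤ κ * κ := mul_le_mul' hκ le_rfl
    _ = κ := Cardinal.mul_eq_self hκ

lemma mk_step_le (A B S : Set M) (hB : #B ≤ κ) (hS : #S ≤ κ) :
    #(step L A B S : Set M) ≤ κ := by
  have hBS : #(B ∪ S : Set M) ≤ κ :=
    le_trans (Cardinal.mk_union_le B S) (Cardinal.add_le_of_le hκ hB hS)
  refine le_trans Cardinal.mk_iUnion_le_sum_mk ?_
  refine le_trans (Cardinal.sum_le_sum _ (fun _ => ℵ₀) (fun p => mk_wset_le A p)) ?_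
  rw [Cardinal.sum_const']
  calc #(Idx L M (B ∪ S)) * ℵ₀ ≤ κ * κ :=
        mul_le_mul' (mk_idx_le κ hκ hL _ hBS) hκ
    _ = κ := Cardinal.mul_eq_self hκ

lemma mk_Cseq_le (A B : Set M) (hB : #B ≤ κ) : ∀ k, #(Cseq L A B k) ≤ κ
  | 0 => by rw [Cseq_zero]; simp
  | k + 1 => by
    rw [Cseq_succ]
    refine le_trans (Cardinal.mk_union_le _ _) (Cardinal.add_le_of_le hκ ?_ ?_)
    · exact mk_Cseq_le A B hB k
    · exact mk_step_le κ hκ hL A B _ hB (mk_Cseq_le A B hB k)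

end Card

end Stmt8Aux

open Stmt8Aux

/-- Remark on finite satisfiability: for any sets `A, B ⊆ M` there is
`C ⊆ A` with `|C| ≤ max(|L|, ℵ₀, |B|)` such that the type over `B ∪ C` of an
enumeration of `A` is finitely satisfied in `C`. -/
theorem stmt_8 {L : FirstOrder.Language.{u, u}} {M : Type u} [L.Structure M]
    (A B : Set M) :
    ∃ C : Set M, C ⊆ A ∧
      Cardinal.mk ↥C ≤ max (max L.card Cardinal.aleph0) (Cardinal.mk ↥B) ∧
      ∀ (n m : ℕ) (φ : L.Formula (Fin n ⊕ Fin m)) (b : Fin m → M),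
        (∀ i, b i ∈ B ∪ C) →
        ∀ a : Fin n → M, (∀ i, a i ∈ A) → φ.Realize (Sum.elim a b) →
          ∃ c : Fin n → M, (∀ i, c i ∈ C) ∧ φ.Realize (Sum.elim c b) := by
  classical
  set κ : Cardinal.{u} := max (max L.card Cardinal.aleph0) (Cardinal.mk ↥B) with hκdef
  have hκ : ℵ₀ ≤ κ := le_max_of_le_left (le_max_right _ _)
  have hL : L.card ≤ κ := le_max_of_le_left (le_max_left _ _)
  have hB : #B ≤ κ := le_max_right _ _
  refine ⟨⋃ k : ULift.{u} ℕ, Cseq L A B k.down, ?_, ?_, ?_⟩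
  · exact Set.iUnion_subset fun k => Cseq_subset A B k.down
  · refine le_trans Cardinal.mk_iUnion_le_sum_mk ?_
    refine le_trans (Cardinal.sum_le_sum _ (fun _ => κ)
      (fun k => mk_Cseq_le κ hκ hL A B hB k.down)) ?_
    rw [Cardinal.sum_const']
    calc #(ULift.{u} ℕ) * κ = ℵ₀ * κ := by simp
      _ ≤ κ * κ := mul_le_mul' hκ le_rfl
      _ = κ := Cardinal.mul_eq_self hκ
  · intro n m φ b hb a ha hφ
    -- find a single stage K containing all the b i that come from C
    have hki : ∀ i : Fin m, ∃ k : ℕ, b i ∈ B ∪ Cseq L A B k := by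
      intro i
      rcases hb i with h | h
      · exact ⟨0, Or.inl h⟩
      · rcases Set.mem_iUnion.1 h with ⟨k, hk⟩
        exact ⟨k.down, Or.inr hk⟩
    choose ks hks using hki
    set K : ℕ := (Finset.univ : Finset (Fin m)).sup ks with hKdef
    have hbK : ∀ i, b i ∈ B ∪ Cseq L A B K := by
      intro i
      rcases hks i with h | h
      · exact Or.inl h
      · exact Or.inr (Cseq_mono A B (Finset.le_sup (Finset.mem_univ i)) h)
    have h : Hex A φ b := ⟨a, ha, hφ⟩
    set p : Idx L M (B ∪ Cseq L A B K) :=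
      ⟨⟨n⟩, ⟨m⟩, φ, fun i => ⟨b i, hbK i⟩⟩ with hpdef
    have hchoose := h.choose_spec
    refine ⟨h.choose, ?_, hchoose.2⟩
    intro i
    have hmem : h.choose i ∈ wset A p := ⟨h, i, rfl⟩
    refine Set.mem_iUnion.2 ⟨⟨K + 1⟩, ?_⟩
    rw [Cseq_succ]
    exact Or.inr (Set.mem_iUnion.2 ⟨p, hmem⟩)
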